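/- There exists a solvable MPP instance (G, R, x_I, x_G) such that no solution simultaneously attains the minimum makespan and the minimum maximum distance; in particular, every solution attaining the minimum makespan contains a robot whose traveled distance is strictly greater than the minimum maximum distance over all solutions. -/

import Mathlib

/-!
Formalization of multi-robot path planning on graphs (MPP).

An MPP instance consists of a connected simple graph `G` on a vertex type `V`,
a finite set of robots (an index type `R`), and injective start/goal
configurations `xI xG : R → V`.  A scheduled path is a map `ℕ → V`.
-/

namespace MPPFormal

variable {V R : Type}

/-- The arrival time of a path `p` with goal `g`: the smallest time `t`
with `p t = g`. -/
noncomputable def arrivalTime (g : V) (p : ℕ → V) : ℕ := sInf {t | p t = g}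

/-- A feasible scheduled path from `s` to `g` in the graph `G`:
it starts at `s`, reaches `g` at some time, stays at `g` forever after the
first time it reaches `g`, and at every time step it either traverses an
edge of `G` or stays put. -/
def FeasiblePath (G : SimpleGraph V) (s g : V) (p : ℕ → V) : Prop :=
  p 0 = s ∧ (∃ t, p t = g) ∧ (∀ t, arrivalTime g p ≤ t → p t = g) ∧
    ∀ t, G.Adj (p t) (p (t + 1)) ∨ p t = p (t + 1)

/-- Two scheduled paths collide if they meet at the same vertex at the same
time, or if they swap along an edge head-on. -/
def Collide (p q : ℕ → V) : Prop :=
  (∃ t, p t = q t) ∨ ∃ t, p t = q (t + 1) ∧ p (t + 1) = q t ∧ p t ≠ p (t + 1)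

/-- The length of a scheduled path: the number of time steps at which it
actually moves. -/
noncomputable def pathLen (p : ℕ → V) : ℕ := Set.ncard {t | p t ≠ p (t + 1)}

/-- A solution to the MPP instance `(G, R, xI, xG)`: a family of pairwise
non-colliding feasible paths, one per robot. -/
def IsSolution (G : SimpleGraph V) (xI xG : R → V) (p : R → ℕ → V) : Prop :=
  (∀ i, FeasiblePath G (xI i) (xG i) (p i)) ∧
    Pairwise fun i j => ¬ Collide (p i) (p j)

/-- `(G, xI, xG)` together with the robot index type `R` forms an MPP
instance: the graph is connected and the start and goal configurations are
injective. -/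
def IsMPPInstance (G : SimpleGraph V) (xI xG : R → V) : Prop :=
  G.Connected ∧ Function.Injective xI ∧ Function.Injective xG

variable [Fintype R]

/-- Total arrival time of a solution. -/
noncomputable def totalTime (xG : R → V) (p : R → ℕ → V) : ℕ :=
  ∑ i, arrivalTime (xG i) (p i)

/-- Makespan (last arrival time) of a solution. -/
noncomputable def makespan (xG : R → V) (p : R → ℕ → V) : ℕ :=
  Finset.univ.sup fun i => arrivalTime (xG i) (p i)

/-- Total distance traveled in a solution. -/
noncomputable def totalDist (p : R → ℕ → V) : ℕ := ∑ i, pathLen (p i)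

/-- Maximum single-robot distance of a solution. -/
noncomputable def maxDist (p : R → ℕ → V) : ℕ :=
  Finset.univ.sup fun i => pathLen (p i)

/-- Minimum total arrival time over all solutions. -/
noncomputable def minTotalTime (G : SimpleGraph V) (xI xG : R → V) : ℕ :=
  sInf {c | ∃ p, IsSolution G xI xG p ∧ totalTime xG p = c}

/-- Minimum makespan over all solutions. -/
noncomputable def minMakespan (G : SimpleGraph V) (xI xG : R → V) : ℕ :=
  sInf {c | ∃ p, IsSolution G xI xG p ∧ makespan xG p = c}

/-- Minimum total distance over all solutions. -/
noncomputable def minTotalDist (G : SimpleGraph V) (xI xG : R → V) : ℕ :=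
  sInf {c | ∃ p, IsSolution G xI xG p ∧ totalDist p = c}

/-- Minimum maximum distance over all solutions. -/
noncomputable def minMaxDist (G : SimpleGraph V) (xI xG : R → V) : ℕ :=
  sInf {c | ∃ p, IsSolution G xI xG p ∧ maxDist p = c}

end MPPFormal

namespace MPPFormal

/-! ### Auxiliary development for the counterexample instance -/

/-- Edge list of the counterexample graph: a path `0-1-2-3-4-5-6-7`
together with the chords `{5,7}` and `{1,7}`. -/
def gEdges : List (Fin 8 × Fin 8) :=
  [(0,1), (1,2), (2,3), (3,4), (4,5), (5,6), (6,7), (5,7), (1,7)]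

/-- The counterexample graph on 8 vertices. -/
def G8 : SimpleGraph (Fin 8) where
  Adj x y := (x, y) ∈ gEdges ∨ (y, x) ∈ gEdges
  symm := ⟨fun _ _ h => Or.symm h⟩
  loopless := by
    have h : ∀ x : Fin 8, ¬((x, x) ∈ gEdges ∨ (x, x) ∈ gEdges) := by decide
    constructor
    intro x hx
    exact h x hx

instance : DecidableRel G8.Adj :=
  fun x y => inferInstanceAs (Decidable ((x, y) ∈ gEdges ∨ (y, x) ∈ gEdges))

lemma g8_connected : G8.Connected := by
  rw [SimpleGraph.connected_iff]
  refine ⟨?_, ⟨0⟩⟩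
  have r1 : G8.Reachable 1 0 := SimpleGraph.Adj.reachable (by decide)
  have r2 : G8.Reachable 2 0 := (SimpleGraph.Adj.reachable (by decide : G8.Adj 2 1)).trans r1
  have r3 : G8.Reachable 3 0 := (SimpleGraph.Adj.reachable (by decide : G8.Adj 3 2)).trans r2
  have r4 : G8.Reachable 4 0 := (SimpleGraph.Adj.reachable (by decide : G8.Adj 4 3)).trans r3
  have r5 : G8.Reachable 5 0 := (SimpleGraph.Adj.reachable (by decide : G8.Adj 5 4)).trans r4
  have r6 : G8.Reachable 6 0 := (SimpleGraph.Adj.reachable (by decide : G8.Adj 6 5)).trans r5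
  have r7 : G8.Reachable 7 0 := (SimpleGraph.Adj.reachable (by decide : G8.Adj 7 6)).trans r6
  have h : ∀ v : Fin 8, G8.Reachable v 0 := by
    intro v
    fin_cases v
    exacts [SimpleGraph.Reachable.refl 0, r1, r2, r3, r4, r5, r6, r7]
  exact fun u v => (h u).trans (h v).symm

/-! ### Generic helper lemmas -/

lemma arrival_le {g : Fin 8} {p : ℕ → Fin 8} {k : ℕ} (hk : p k = g) :
    arrivalTime g p ≤ k :=
  Nat.sInf_le hk

lemma arrival_eq {g : Fin 8} {p : ℕ → Fin 8} {k : ℕ} (hk : p k = g)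
    (hlt : ∀ m, m < k → p m ≠ g) : arrivalTime g p = k := by
  refine le_antisymm (arrival_le hk) ?_
  by_contra h
  push_neg at h
  have hmem : p (arrivalTime g p) = g := Nat.sInf_mem (⟨k, hk⟩ : {t | p t = g}.Nonempty)
  exact hlt _ h hmem

lemma moves_finite {g : Fin 8} {p : ℕ → Fin 8}
    (hstay : ∀ t, arrivalTime g p ≤ t → p t = g) :
    {t | p t ≠ p (t + 1)}.Finite := by
  apply Set.Finite.subset (Set.finite_Iio (arrivalTime g p))
  intro t ht
  simp only [Set.mem_setOf_eq] at ht
  simp only [Set.mem_Iio]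
  by_contra h
  push_neg at h
  exact ht ((hstay t h).trans (hstay (t + 1) (by omega)).symm)

lemma potential_bound (φ : Fin 8 → ℕ) (hφ : ∀ x y, G8.Adj x y → φ x ≤ φ y + 1)
    (p : ℕ → Fin 8) (hstep : ∀ t, G8.Adj (p t) (p (t + 1)) ∨ p t = p (t + 1)) :
    ∀ T, φ (p 0) ≤ φ (p T) + ((Finset.range T).filter fun t => p t ≠ p (t + 1)).card := by
  intro T
  induction T with
  | zero => simp
  | succ n ih =>
    rw [Finset.range_add_one, Finset.filter_insert]
    by_cases h : p n = p (n + 1)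
    · rw [if_neg (not_not_intro h), ← h]
      exact ih
    · rw [if_pos h, Finset.card_insert_of_notMem (by simp)]
      have hb := hφ _ _ ((hstep n).resolve_right h)
      omega

lemma pathLen_lower (φ : Fin 8 → ℕ) (hφ : ∀ x y, G8.Adj x y → φ x ≤ φ y + 1)
    {s g : Fin 8} (p : ℕ → Fin 8) (hf : FeasiblePath G8 s g p) :
    φ s ≤ φ g + pathLen p := by
  obtain ⟨h0, -, hstay, hstep⟩ := hf
  have hfin := moves_finite hstay
  have hb := potential_bound φ hφ p hstep (arrivalTime g p)
  rw [h0, hstay _ le_rfl] at hb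
  have hcard :
      ((Finset.range (arrivalTime g p)).filter fun t => p t ≠ p (t + 1)).card ≤ pathLen p := by
    have hsub :
        ↑((Finset.range (arrivalTime g p)).filter fun t => p t ≠ p (t + 1)) ⊆
          {t | p t ≠ p (t + 1)} := by
      intro t ht
      simp only [Finset.coe_filter, Set.mem_setOf_eq] at ht
      exact ht.2
    have := Set.ncard_le_ncard hsub hfin
    rwa [Set.ncard_coe_finset] at this
  exact hb.trans (Nat.add_le_add_left hcard _)

/-- Distance-to-vertex-0 potential. -/
def phi1 : Fin 8 → ℕ := ![0, 1, 2, 3, 4, 3, 3, 2]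

lemma phi1_adj : ∀ x y, G8.Adj x y → phi1 x ≤ phi1 y + 1 := by decide

/-! ### Shape lemmas: short quick paths are essentially unique -/

lemma shape1_cases : ∀ v1 v2 v3 : Fin 8,
    (G8.Adj 5 v1 ∨ (5 : Fin 8) = v1) → (G8.Adj v1 v2 ∨ v1 = v2) →
    (G8.Adj v2 v3 ∨ v2 = v3) → (G8.Adj v3 0 ∨ v3 = 0) →
    ¬((5 : Fin 8) ≠ v1 ∧ v1 ≠ v2 ∧ v2 ≠ v3 ∧ v3 ≠ 0) →
    v1 = 5 ∧ v2 = 7 ∧ v3 = 1 ∨ v1 = 7 ∧ v2 = 1 ∧ v3 = 0 ∨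
      v1 = 7 ∧ v2 = 1 ∧ v3 = 1 ∨ v1 = 7 ∧ v2 = 7 ∧ v3 = 1 := by decide

lemma shape2_cases : ∀ v1 v2 v3 : Fin 8,
    (G8.Adj 2 v1 ∨ (2 : Fin 8) = v1) → (G8.Adj v1 v2 ∨ v1 = v2) →
    (G8.Adj v2 v3 ∨ v2 = v3) → (G8.Adj v3 6 ∨ v3 = 6) →
    ¬((2 : Fin 8) ≠ v1 ∧ v1 ≠ v2 ∧ v2 ≠ v3 ∧ v3 ≠ 6) →
    v1 = 1 ∧ v2 = 1 ∧ v3 = 7 ∨ v1 = 1 ∧ v2 = 7 ∧ v3 = 6 ∨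
      v1 = 1 ∧ v2 = 7 ∧ v3 = 7 ∨ v1 = 2 ∧ v2 = 1 ∧ v3 = 7 := by decide

lemma not_all_moves {g : Fin 8} {p : ℕ → Fin 8}
    (hstay : ∀ t, arrivalTime g p ≤ t → p t = g) (hl : pathLen p ≤ 3) :
    ¬(p 0 ≠ p 1 ∧ p 1 ≠ p 2 ∧ p 2 ≠ p 3 ∧ p 3 ≠ p 4) := by
  rintro ⟨a, b, c, d⟩
  have hsub : ↑({0, 1, 2, 3} : Finset ℕ) ⊆ {t | p t ≠ p (t + 1)} := by
    intro t ht
    simp only [Finset.coe_insert, Set.mem_insert_iff, Finset.coe_singleton,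
      Set.mem_singleton_iff] at ht
    rcases ht with rfl | rfl | rfl | rfl
    · exact a
    · exact b
    · exact c
    · exact d
  have h4 : 4 ≤ pathLen p := by
    have h := Set.ncard_le_ncard hsub (moves_finite hstay)
    rw [Set.ncard_coe_finset] at h
    exact le_trans (by decide) h
  omega

lemma shape1 {p : ℕ → Fin 8} (hp : FeasiblePath G8 5 0 p)
    (ha : arrivalTime 0 p ≤ 4) (hl : pathLen p ≤ 3) :
    p 1 = 5 ∧ p 2 = 7 ∧ p 3 = 1 ∨ p 1 = 7 ∧ p 2 = 1 ∧ p 3 = 0 ∨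
      p 1 = 7 ∧ p 2 = 1 ∧ p 3 = 1 ∨ p 1 = 7 ∧ p 2 = 7 ∧ p 3 = 1 := by
  obtain ⟨h0, -, hstay, hstep⟩ := hp
  have h4 : p 4 = 0 := hstay 4 ha
  have hnot : ¬((5 : Fin 8) ≠ p 1 ∧ p 1 ≠ p 2 ∧ p 2 ≠ p 3 ∧ p 3 ≠ 0) := by
    rintro ⟨a, b, c, d⟩
    exact not_all_moves hstay hl ⟨by rw [h0]; exact a, b, c, by rw [h4]; exact d⟩
  have s0 : G8.Adj 5 (p 1) ∨ (5 : Fin 8) = p 1 := by rw [← h0]; exact hstep 0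
  have s1 : G8.Adj (p 1) (p 2) ∨ p 1 = p 2 := hstep 1
  have s2 : G8.Adj (p 2) (p 3) ∨ p 2 = p 3 := hstep 2
  have s3 : G8.Adj (p 3) 0 ∨ p 3 = 0 := by rw [← h4]; exact hstep 3
  exact shape1_cases (p 1) (p 2) (p 3) s0 s1 s2 s3 hnot

lemma shape2 {p : ℕ → Fin 8} (hp : FeasiblePath G8 2 6 p)
    (ha : arrivalTime 6 p ≤ 4) (hl : pathLen p ≤ 3) :
    p 1 = 1 ∧ p 2 = 1 ∧ p 3 = 7 ∨ p 1 = 1 ∧ p 2 = 7 ∧ p 3 = 6 ∨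
      p 1 = 1 ∧ p 2 = 7 ∧ p 3 = 7 ∨ p 1 = 2 ∧ p 2 = 1 ∧ p 3 = 7 := by
  obtain ⟨h0, -, hstay, hstep⟩ := hp
  have h4 : p 4 = 6 := hstay 4 ha
  have hnot : ¬((2 : Fin 8) ≠ p 1 ∧ p 1 ≠ p 2 ∧ p 2 ≠ p 3 ∧ p 3 ≠ 6) := by
    rintro ⟨a, b, c, d⟩
    exact not_all_moves hstay hl ⟨by rw [h0]; exact a, b, c, by rw [h4]; exact d⟩
  have s0 : G8.Adj 2 (p 1) ∨ (2 : Fin 8) = p 1 := by rw [← h0]; exact hstep 0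
  have s1 : G8.Adj (p 1) (p 2) ∨ p 1 = p 2 := hstep 1
  have s2 : G8.Adj (p 2) (p 3) ∨ p 2 = p 3 := hstep 2
  have s3 : G8.Adj (p 3) 6 ∨ p 3 = 6 := by rw [← h4]; exact hstep 3
  exact shape2_cases (p 1) (p 2) (p 3) s0 s1 s2 s3 hnot

lemma meet_at (p q : ℕ → Fin 8) (t : ℕ) (h : p t = q t) : Collide p q :=
  Or.inl ⟨t, h⟩

lemma swap_at (p q : ℕ → Fin 8) (t : ℕ) (h1 : p t = q (t + 1)) (h2 : p (t + 1) = q t)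
    (h3 : p t ≠ p (t + 1)) : Collide p q :=
  Or.inr ⟨t, h1, h2, h3⟩

/-- The combinatorial core: two quick short feasible paths must collide. -/
lemma core {p q : ℕ → Fin 8} (hp : FeasiblePath G8 5 0 p) (hq : FeasiblePath G8 2 6 q)
    (hap : arrivalTime 0 p ≤ 4) (haq : arrivalTime 6 q ≤ 4)
    (hlp : pathLen p ≤ 3) (hlq : pathLen q ≤ 3) : Collide p q := by
  rcases shape1 hp hap hlp with ⟨e1, e2, e3⟩ | ⟨e1, e2, e3⟩ | ⟨e1, e2, e3⟩ | ⟨e1, e2, e3⟩ <;>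
    rcases shape2 hq haq hlq with ⟨f1, f2, f3⟩ | ⟨f1, f2, f3⟩ | ⟨f1, f2, f3⟩ | ⟨f1, f2, f3⟩ <;>
      first
        | exact meet_at p q 2 (e2.trans f2.symm)
        | exact swap_at p q 1 (e1.trans f2.symm) (e2.trans f1.symm)
            (by rw [e1, e2]; decide)
        | exact swap_at p q 2 (e2.trans f3.symm) (e3.trans f2.symm)
            (by rw [e2, e3]; decide)

lemma collide_symm {p q : ℕ → Fin 8} (h : Collide p q) : Collide q p := by
  rcases h with ⟨t, ht⟩ | ⟨t, h1, h2, h3⟩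
  · exact Or.inl ⟨t, ht.symm⟩
  · exact Or.inr ⟨t, h2.symm, h1.symm, fun he => h3 (h1.trans (he.symm.trans h2.symm))⟩

/-! ### Witness solutions -/

/-- Robot 1 marching straight: `5,7,1,0,0,...` -/
def w1 : ℕ → Fin 8 := fun t => [5, 7, 1].getD t 0

/-- Robot 2 taking the long detour: `2,3,4,5,6,6,...` -/
def w2 : ℕ → Fin 8 := fun t => [2, 3, 4, 5].getD t 6

/-- Robot 1 waiting, then marching: `5,5,5,7,1,0,0,...` -/
def u1 : ℕ → Fin 8 := fun t => [5, 5, 5, 7, 1].getD t 0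

/-- Robot 2 taking the short route: `2,1,7,6,6,...` -/
def u2 : ℕ → Fin 8 := fun t => [2, 1, 7].getD t 6

lemma w1_stay : ∀ t, 3 ≤ t → w1 t = 0 := fun _ ht =>
  List.getD_eq_default _ _ (by simp only [List.length_cons, List.length_nil]; omega)

lemma w2_stay : ∀ t, 4 ≤ t → w2 t = 6 := fun _ ht =>
  List.getD_eq_default _ _ (by simp only [List.length_cons, List.length_nil]; omega)

lemma u1_stay : ∀ t, 5 ≤ t → u1 t = 0 := fun _ ht =>
  List.getD_eq_default _ _ (by simp only [List.length_cons, List.length_nil]; omega)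

lemma u2_stay : ∀ t, 3 ≤ t → u2 t = 6 := fun _ ht =>
  List.getD_eq_default _ _ (by simp only [List.length_cons, List.length_nil]; omega)

lemma w1_arr : arrivalTime 0 w1 = 3 :=
  arrival_eq (by decide) (by intro m hm; interval_cases m <;> decide)

lemma w2_arr : arrivalTime 6 w2 = 4 :=
  arrival_eq (by decide) (by intro m hm; interval_cases m <;> decide)

lemma u1_arr : arrivalTime 0 u1 = 5 :=
  arrival_eq (by decide) (by intro m hm; interval_cases m <;> decide)

lemma u2_arr : arrivalTime 6 u2 = 3 :=
  arrival_eq (by decide) (by intro m hm; interval_cases m <;> decide)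

lemma w1_feas : FeasiblePath G8 5 0 w1 := by
  refine ⟨by decide, ⟨3, by decide⟩, ?_, ?_⟩
  · intro t ht
    rw [w1_arr] at ht
    exact w1_stay t ht
  · intro t
    by_cases h : t < 3
    · interval_cases t
      · left; decide
      · left; decide
      · left; decide
    · push_neg at h
      right
      rw [w1_stay t h, w1_stay (t + 1) (by omega)]

lemma w2_feas : FeasiblePath G8 2 6 w2 := by
  refine ⟨by decide, ⟨4, by decide⟩, ?_, ?_⟩
  · intro t ht
    rw [w2_arr] at ht
    exact w2_stay t ht
  · intro t
    by_cases h : t < 4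
    · interval_cases t
      · left; decide
      · left; decide
      · left; decide
      · left; decide
    · push_neg at h
      right
      rw [w2_stay t h, w2_stay (t + 1) (by omega)]

lemma u1_feas : FeasiblePath G8 5 0 u1 := by
  refine ⟨by decide, ⟨5, by decide⟩, ?_, ?_⟩
  · intro t ht
    rw [u1_arr] at ht
    exact u1_stay t ht
  · intro t
    by_cases h : t < 5
    · interval_cases t
      · right; decide
      · right; decide
      · left; decide
      · left; decide
      · left; decide
    · push_neg at h
      right
      rw [u1_stay t h, u1_stay (t + 1) (by omega)]

lemma u2_feas : FeasiblePath G8 2 6 u2 := by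
  refine ⟨by decide, ⟨3, by decide⟩, ?_, ?_⟩
  · intro t ht
    rw [u2_arr] at ht
    exact u2_stay t ht
  · intro t
    by_cases h : t < 3
    · interval_cases t
      · left; decide
      · left; decide
      · left; decide
    · push_neg at h
      right
      rw [u2_stay t h, u2_stay (t + 1) (by omega)]

lemma nc1 : ¬ Collide w1 w2 := by
  rintro (⟨t, ht⟩ | ⟨t, h1, h2, h3⟩)
  · by_cases h : t < 4
    · interval_cases t <;> exact absurd ht (by decide)
    · push_neg at h
      rw [w1_stay t (by omega), w2_stay t (by omega)] at ht
      exact absurd ht (by decide)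
  · by_cases h : t < 4
    · interval_cases t <;> exact absurd h1 (by decide)
    · push_neg at h
      rw [w1_stay t (by omega), w1_stay (t + 1) (by omega)] at h3
      exact h3 rfl

lemma nc2 : ¬ Collide u1 u2 := by
  rintro (⟨t, ht⟩ | ⟨t, h1, h2, h3⟩)
  · by_cases h : t < 5
    · interval_cases t <;> exact absurd ht (by decide)
    · push_neg at h
      rw [u1_stay t (by omega), u2_stay t (by omega)] at ht
      exact absurd ht (by decide)
  · by_cases h : t < 5
    · interval_cases t <;> exact absurd h1 (by decide)
    · push_neg at h
      rw [u1_stay t (by omega), u1_stay (t + 1) (by omega)] at h3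
      exact h3 rfl

/-- First witness solution: makespan 4 (robot 2 takes the detour). -/
def sol1P : Fin 2 → ℕ → Fin 8 := ![w1, w2]

/-- Second witness solution: max distance 3 (robot 1 waits). -/
def sol2P : Fin 2 → ℕ → Fin 8 := ![u1, u2]

lemma sol1_isSol : IsSolution G8 ![5, 2] ![0, 6] sol1P := by
  constructor
  · intro i
    fin_cases i
    · exact w1_feas
    · exact w2_feas
  · intro i j hij
    fin_cases i <;> fin_cases j
    · exact absurd rfl hij
    · exact nc1
    · exact fun c => nc1 (collide_symm c)
    · exact absurd rfl hij

lemma sol2_isSol : IsSolution G8 ![5, 2] ![0, 6] sol2P := by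
  constructor
  · intro i
    fin_cases i
    · exact u1_feas
    · exact u2_feas
  · intro i j hij
    fin_cases i <;> fin_cases j
    · exact absurd rfl hij
    · exact nc2
    · exact fun c => nc2 (collide_symm c)
    · exact absurd rfl hij

lemma mk1_le : makespan ![0, 6] sol1P ≤ 4 := by
  apply Finset.sup_le
  intro i _
  fin_cases i
  · show arrivalTime 0 w1 ≤ 4
    rw [w1_arr]; omega
  · show arrivalTime 6 w2 ≤ 4
    rw [w2_arr]

lemma pl_u1 : pathLen u1 ≤ 3 := by
  have hsub : {t | u1 t ≠ u1 (t + 1)} ⊆ ↑({2, 3, 4} : Finset ℕ) := by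
    intro t ht
    simp only [Set.mem_setOf_eq] at ht
    simp only [Finset.coe_insert, Set.mem_insert_iff, Finset.coe_singleton,
      Set.mem_singleton_iff]
    by_contra hc
    push_neg at hc
    obtain ⟨hc2, hc3, hc4⟩ := hc
    rcases Nat.lt_or_ge t 2 with h | h
    · interval_cases t
      · exact ht (by decide)
      · exact ht (by decide)
    · have h5 : 5 ≤ t := by omega
      exact ht ((u1_stay t (by omega)).trans (u1_stay (t + 1) (by omega)).symm)
  have h := Set.ncard_le_ncard hsub (Finset.finite_toSet _)
  rw [Set.ncard_coe_finset] at h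
  exact le_trans h (by decide)

lemma pl_u2 : pathLen u2 ≤ 3 := by
  have hsub : {t | u2 t ≠ u2 (t + 1)} ⊆ ↑({0, 1, 2} : Finset ℕ) := by
    intro t ht
    simp only [Set.mem_setOf_eq] at ht
    simp only [Finset.coe_insert, Set.mem_insert_iff, Finset.coe_singleton,
      Set.mem_singleton_iff]
    by_contra hc
    push_neg at hc
    obtain ⟨hc0, hc1, hc2⟩ := hc
    have h3 : 3 ≤ t := by omega
    exact ht ((u2_stay t (by omega)).trans (u2_stay (t + 1) (by omega)).symm)
  have h := Set.ncard_le_ncard hsub (Finset.finite_toSet _)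
  rw [Set.ncard_coe_finset] at h
  exact le_trans h (by decide)

lemma md2_le : maxDist sol2P ≤ 3 := by
  apply Finset.sup_le
  intro i _
  fin_cases i
  · exact pl_u1
  · exact pl_u2

lemma minmk_le : minMakespan G8 ![5, 2] ![0, 6] ≤ 4 :=
  le_trans (Nat.sInf_le ⟨sol1P, sol1_isSol, rfl⟩) mk1_le

lemma minmd_eq : minMaxDist G8 ![5, 2] ![0, 6] = 3 := by
  refine le_antisymm (le_trans (Nat.sInf_le ⟨sol2P, sol2_isSol, rfl⟩) md2_le) ?_
  refine le_csInf ⟨_, sol2P, sol2_isSol, rfl⟩ ?_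
  rintro c ⟨p, hsol, rfl⟩
  have f0 : FeasiblePath G8 5 0 (p 0) := hsol.1 0
  have h := pathLen_lower phi1 phi1_adj (p 0) f0
  have e1 : phi1 5 = 3 := rfl
  have e2 : phi1 0 = 0 := rfl
  rw [e1, e2] at h
  have h2 : pathLen (p 0) ≤ maxDist p :=
    Finset.le_sup (f := fun i => pathLen (p i)) (Finset.mem_univ 0)
  omega

/-- No solution can have makespan at most `4` and both path lengths at most `3`. -/
lemma no_good (p : Fin 2 → ℕ → Fin 8) (hsol : IsSolution G8 ![5, 2] ![0, 6] p)
    (hmak : makespan ![0, 6] p ≤ 4) (hd0 : pathLen (p 0) ≤ 3) (hd1 : pathLen (p 1) ≤ 3) :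
    False := by
  have f0 : FeasiblePath G8 5 0 (p 0) := hsol.1 0
  have f1 : FeasiblePath G8 2 6 (p 1) := hsol.1 1
  have a0 : arrivalTime 0 (p 0) ≤ 4 :=
    le_trans (Finset.le_sup (f := fun i => arrivalTime (![0, 6] i) (p i)) (Finset.mem_univ 0)) hmak
  have a1 : arrivalTime 6 (p 1) ≤ 4 :=
    le_trans (Finset.le_sup (f := fun i => arrivalTime (![0, 6] i) (p i)) (Finset.mem_univ 1)) hmak
  exact hsol.2 (show (0 : Fin 2) ≠ 1 by decide) (core f0 f1 a0 a1 hd0 hd1)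


/-- There exists a solvable MPP instance such that no solution simultaneously
attains the minimum makespan and the minimum maximum distance; in particular,
every solution attaining the minimum makespan contains a robot whose traveled
distance is strictly greater than the minimum maximum distance over all
solutions. -/
theorem pareto_makespan_maxDist :
    ∃ (k : ℕ) (V : Type) (G : SimpleGraph V) (xI xG : Fin k → V),
      IsMPPInstance G xI xG ∧ (∃ p, IsSolution G xI xG p) ∧
      (¬ ∃ p, IsSolution G xI xG p ∧ makespan xG p = minMakespan G xI xG ∧
        maxDist p = minMaxDist G xI xG) ∧
      ∀ p, IsSolution G xI xG p → makespan xG p = minMakespan G xI xG →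
        ∃ i, minMaxDist G xI xG < pathLen (p i) := by
  refine ⟨2, Fin 8, G8, ![5, 2], ![0, 6], ⟨g8_connected, by decide, by decide⟩,
    ⟨sol1P, sol1_isSol⟩, ?_, ?_⟩
  · rintro ⟨p, hsol, hmak, hmax⟩
    have hm4 : makespan ![0, 6] p ≤ 4 := by rw [hmak]; exact minmk_le
    have hd : maxDist p = 3 := by rw [hmax, minmd_eq]
    exact no_good p hsol hm4
      (le_trans (Finset.le_sup (f := fun i => pathLen (p i)) (Finset.mem_univ 0)) (le_of_eq hd))
      (le_trans (Finset.le_sup (f := fun i => pathLen (p i)) (Finset.mem_univ 1)) (le_of_eq hd))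
  · intro p hsol hmak
    by_contra hc
    push_neg at hc
    simp only [minmd_eq] at hc
    exact no_good p hsol (by rw [hmak]; exact minmk_le) (hc 0) (hc 1)


end MPPFormal
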